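/- Let G be a finite simple (C₄,C₅)-free graph with minimum degree δ ≥ 3. If v and w are adjacent vertices of G, then |N_{≤2}(vw)| ≥ 2δ² − 5δ + 5 if δ is even, and |N_{≤2}(vw)| ≥ 2δ² − 5δ + 7 if δ is odd. -/

import Mathlib

open SimpleGraph Finset

/-- The eccentricity of a vertex `v`: the maximum distance from `v` to a vertex of `G`. -/
noncomputable def eccent {V : Type*} (G : SimpleGraph V) (v : V) : ℕ :=
  sSup (Set.range (G.dist v))

/-- The average eccentricity of a finite graph `G`. -/
noncomputable def avec {V : Type*} (G : SimpleGraph V) : ℝ :=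
  (∑ᶠ v, (eccent G v : ℝ)) / (Nat.card V)

/-- `G` contains no cycle of length `m` as a (not necessarily induced) subgraph. -/
def CycleFree {V : Type*} (G : SimpleGraph V) (m : ℕ) : Prop :=
  ∀ ⦃v : V⦄ (w : G.Walk v v), w.IsCycle → w.length ≠ m

section Aux

variable {V : Type*} {G : SimpleGraph V}

lemma noC4 (h4 : CycleFree G 4) {a b c d : V}
    (hab : G.Adj a b) (hbc : G.Adj b c) (hcd : G.Adj c d) (hda : G.Adj d a)
    (hac : a ≠ c) (hbd : b ≠ d) : False := by
  refine h4 (.cons hab (.cons hbc (.cons hcd (.cons hda .nil)))) ?_ (by simp)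
  constructor
  · constructor
    · rw [Walk.isTrail_def]
      simp [Sym2.eq, Sym2.rel_iff', hab.ne, hbc.ne, hcd.ne, hda.ne, hac, hbd,
        hab.ne', hbc.ne', hcd.ne', hda.ne', hac.symm, hbd.symm]
    · simp
  · simp [hbc.ne, hbd, hcd.ne, hda.ne', hac.symm, hbd.symm, hda.ne, hab.ne']

lemma noC5 (h5 : CycleFree G 5) {a b c d e : V}
    (hab : G.Adj a b) (hbc : G.Adj b c) (hcd : G.Adj c d) (hde : G.Adj d e) (hea : G.Adj e a)
    (hac : a ≠ c) (had : a ≠ d) (hbd : b ≠ d) (hbe : b ≠ e) (hce : c ≠ e) : False := by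
  refine h5 (.cons hab (.cons hbc (.cons hcd (.cons hde (.cons hea .nil))))) ?_ (by simp)
  constructor
  · constructor
    · rw [Walk.isTrail_def]
      simp [Sym2.eq, Sym2.rel_iff', hab.ne, hbc.ne, hcd.ne, hde.ne, hea.ne, hac, had, hbd, hbe, hce,
        hab.ne', hbc.ne', hcd.ne', hde.ne', hea.ne', hac.symm, had.symm, hbd.symm, hbe.symm, hce.symm]
    · simp
  · simp [hbc.ne, hbd, hbe, hcd.ne, hce, hde.ne, hea.ne', hac.symm, had.symm, hbd.symm, hbe.symm, hce.symm, hde.ne, hab.ne', hea.ne]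

/-- Two distinct neighbors of `v` cannot have a second common neighbor `z ≠ v`. -/
lemma uniqNbr (h4 : CycleFree G 4) {v z x y : V} (hzv : z ≠ v)
    (hvx : G.Adj v x) (hvy : G.Adj v y) (hzx : G.Adj z x) (hzy : G.Adj z y) : x = y := by
  by_contra hne
  exact noC4 h4 hvx hzx.symm hzy hvy.symm hzv.symm hne

/-- A neighbor of `v` other than `w` and a neighbor of `w` other than `v` are not adjacent. -/
lemma crossAdj (h4 : CycleFree G 4) {v w x y : V} (hvw : G.Adj v w)
    (hvx : G.Adj v x) (hxw : x ≠ w) (hwy : G.Adj w y) (hyv : y ≠ v)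
    (hxy : G.Adj x y) : False :=
  noC4 h4 hvx hxy hwy.symm hvw.symm hyv.symm hxw

lemma crossC5 (h5 : CycleFree G 5) {v w x y z : V} (hvw : G.Adj v w)
    (hvx : G.Adj v x) (hwy : G.Adj w y) (hxz : G.Adj x z) (hzy : G.Adj z y)
    (hzv : z ≠ v) (hzw : z ≠ w) (hyv : y ≠ v) (hxw : x ≠ w) (hxy : x ≠ y) : False :=
  noC5 h5 hvx hxz hzy hwy.symm hvw.symm hzv.symm hyv.symm hxy hxw hzw

lemma even_card_pairing {α : Type*} [DecidableEq α] (f : α → α) (s : Finset α)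
    (hmem : ∀ x ∈ s, f x ∈ s) (hinv : ∀ x ∈ s, f (f x) = x) (hne : ∀ x ∈ s, f x ≠ x) :
    Even s.card := by
  induction s using Finset.strongInduction with
  | _ s ih =>
    rcases s.eq_empty_or_nonempty with rfl | ⟨x, hx⟩
    · simp
    · have hfx : f x ∈ s := hmem x hx
      have hfxne : f x ≠ x := hne x hx
      have hfxmem : f x ∈ s.erase x := Finset.mem_erase.mpr ⟨hfxne, hfx⟩
      set s' := (s.erase x).erase (f x) with hs'
      have hsub : s' ⊆ s := (Finset.erase_subset _ _).trans (Finset.erase_subset _ _)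
      have hss : s' ⊂ s := Finset.ssubset_iff_of_subset hsub |>.mpr
        ⟨x, hx, by simp [hs', hfxne.symm]⟩
      have hmem' : ∀ y ∈ s', y ∈ s ∧ y ≠ x ∧ y ≠ f x := by
        intro y hy
        simp only [hs', Finset.mem_erase] at hy
        exact ⟨hy.2.2, hy.2.1, hy.1⟩
      have heven : Even s'.card := by
        refine ih s' hss ?_ ?_ ?_
        · intro y hy
          obtain ⟨hys, hyx, hyfx⟩ := hmem' y hy
          have h1 : f y ∈ s := hmem y hys
          have h2 : f y ≠ x := by
            intro h
            apply hyfx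
            have := hinv y hys
            rw [h] at this
            exact this.symm
          have h3 : f y ≠ f x := by
            intro h
            apply hyx
            have := hinv y hys
            rw [h, hinv x hx] at this
            exact this.symm
          simp [hs', Finset.mem_erase, h1, h2, h3]
        · intro y hy; exact hinv y (hmem' y hy).1
        · intro y hy; exact hne y (hmem' y hy).1
      have hcard : s.card = s'.card + 2 := by
        have h1 : (s.erase x).card = s.card - 1 := Finset.card_erase_of_mem hx
        have h2 : s'.card = (s.erase x).card - 1 := Finset.card_erase_of_mem hfxmem
        have h3 : 2 ≤ s.card := Finset.one_lt_card.mpr ⟨f x, hfx, x, hx, hfxne⟩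
        omega
      obtain ⟨k, hk⟩ := heven
      exact ⟨k + 1, by omega⟩

end Aux

section Main

variable {V : Type*} [Fintype V] [DecidableEq V] {G : SimpleGraph V} [DecidableRel G.Adj]

/-- The second neighbourhood of `x` relative to the edge `vw`. -/
def SS (G : SimpleGraph V) [DecidableRel G.Adj] (v w x : V) : Finset V :=
  G.neighborFinset x \ (G.neighborFinset v ∪ G.neighborFinset w ∪ {v, w})

lemma SS_symm (v w x : V) : SS G v w x = SS G w v x := by
  ext z; simp [SS]; tauto

lemma self_not_mem_SS (v w x : V) : x ∉ SS G v w x := by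
  simp [SS, SimpleGraph.irrefl]

lemma card_TT (v w x : V) : (insert x (SS G v w x)).card = (SS G v w x).card + 1 :=
  Finset.card_insert_of_notMem (self_not_mem_SS v w x)

lemma inter_card_le' (h4 : CycleFree G 4) {v w x : V} (hvw : G.Adj v w)
    (hvx : G.Adj v x) (hxw : x ≠ w) :
    (G.neighborFinset x ∩ (G.neighborFinset v ∪ G.neighborFinset w ∪ {v, w})).card ≤ 2 := by
  by_cases hwx : G.Adj w x
  · refine (Finset.card_le_card ?_).trans ((Finset.card_insert_le v {w}).trans (by simp))
    intro z hz
    simp only [Finset.mem_inter, Finset.mem_union, SimpleGraph.mem_neighborFinset,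
      Finset.mem_insert, Finset.mem_singleton] at hz ⊢
    obtain ⟨hxz, hcase⟩ := hz
    rcases hcase with (hvz | hwz) | rfl | rfl
    · right; by_contra hzw; exact crossAdj h4 hvw hvz hzw hwx hvx.ne' hxz.symm
    · left; by_contra hzv; exact crossAdj h4 hvw hvx hxw hwz hzv hxz
    · exact Or.inl rfl
    · exact Or.inr rfl
  · have hsub : G.neighborFinset x ∩ (G.neighborFinset v ∪ G.neighborFinset w ∪ {v, w}) ⊆
        insert v (G.neighborFinset x ∩ G.neighborFinset v) := by
      intro z hz
      simp only [Finset.mem_inter, Finset.mem_union, SimpleGraph.mem_neighborFinset,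
        Finset.mem_insert, Finset.mem_singleton] at hz ⊢
      obtain ⟨hxz, hcase⟩ := hz
      rcases hcase with (hvz | hwz) | rfl | rfl
      · exact Or.inr ⟨hxz, hvz⟩
      · left; by_contra hzv; exact crossAdj h4 hvw hvx hxw hwz hzv hxz
      · exact Or.inl rfl
      · exact absurd hxz.symm hwx
    refine (Finset.card_le_card hsub).trans ((Finset.card_insert_le _ _).trans ?_)
    have h1 : (G.neighborFinset x ∩ G.neighborFinset v).card ≤ 1 := by
      rw [Finset.card_le_one]
      intro a ha b hb
      simp only [Finset.mem_inter, SimpleGraph.mem_neighborFinset] at ha hb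
      exact uniqNbr h4 hvx.ne' ha.2 hb.2 ha.1 hb.1
    omega

lemma nbhd_symm (v w : V) : G.neighborFinset v ∪ G.neighborFinset w ∪ ({v, w} : Finset V) =
    G.neighborFinset w ∪ G.neighborFinset v ∪ {w, v} := by
  ext z; simp; tauto

lemma inter_card_le (h4 : CycleFree G 4) {v w x : V} (hvw : G.Adj v w)
    (hx : x ∈ (G.neighborFinset v).erase w ∪ (G.neighborFinset w).erase v) :
    (G.neighborFinset x ∩ (G.neighborFinset v ∪ G.neighborFinset w ∪ {v, w})).card ≤ 2 := by
  simp only [Finset.mem_union, Finset.mem_erase, SimpleGraph.mem_neighborFinset] at hx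
  rcases hx with ⟨hxw, hvx⟩ | ⟨hxv, hwx⟩
  · exact inter_card_le' h4 hvw hvx hxw
  · rw [nbhd_symm]
    exact inter_card_le' h4 hvw.symm hwx hxv

lemma card_nbhd_split (v w x : V) : (G.neighborFinset x).card ≤ (SS G v w x).card +
    (G.neighborFinset x ∩ (G.neighborFinset v ∪ G.neighborFinset w ∪ {v, w})).card := by
  have h3 := Finset.card_union_le
    (G.neighborFinset x \ (G.neighborFinset v ∪ G.neighborFinset w ∪ {v, w}))
    (G.neighborFinset x ∩ (G.neighborFinset v ∪ G.neighborFinset w ∪ {v, w}))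
  rw [Finset.sdiff_union_inter] at h3
  exact h3

lemma Scard (h4 : CycleFree G 4) {δ : ℕ} (hdeg : ∀ x, δ ≤ (G.neighborFinset x).card)
    {v w x : V} (hvw : G.Adj v w)
    (hx : x ∈ (G.neighborFinset v).erase w ∪ (G.neighborFinset w).erase v) :
    δ - 2 ≤ (SS G v w x).card := by
  have h2 := inter_card_le h4 hvw hx
  have h1 := hdeg x
  have h3 := card_nbhd_split (G := G) v w x
  omega

lemma Scard1 (h4 : CycleFree G 4) {δ : ℕ} (hdeg : ∀ x, δ ≤ (G.neighborFinset x).card)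
    {v w x : V} (hvw : G.Adj v w) (hvx : G.Adj v x) (hxw : x ≠ w) (hwx : ¬ G.Adj w x)
    (hempty : G.neighborFinset x ∩ G.neighborFinset v = ∅) :
    δ - 1 ≤ (SS G v w x).card := by
  have h2 : (G.neighborFinset x ∩ (G.neighborFinset v ∪ G.neighborFinset w ∪ {v, w})).card ≤ 1 := by
    refine (Finset.card_le_card ?_).trans (by simp : ({v} : Finset V).card ≤ 1)
    intro z hz
    simp only [Finset.mem_inter, Finset.mem_union, SimpleGraph.mem_neighborFinset,
      Finset.mem_insert, Finset.mem_singleton] at hz ⊢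
    obtain ⟨hxz, hcase⟩ := hz
    rcases hcase with (hvz | hwz) | rfl | rfl
    · have hz2 : z ∈ G.neighborFinset x ∩ G.neighborFinset v := by
        simp [SimpleGraph.mem_neighborFinset, hxz, hvz]
      rw [hempty] at hz2
      exact absurd hz2 (Finset.notMem_empty z)
    · by_contra hzv; exact crossAdj h4 hvw hvx hxw hwz hzv hxz
    · rfl
    · exact absurd hxz.symm hwx
  have h1 := hdeg x
  have h3 := card_nbhd_split (G := G) v w x
  omega

/-- The parity-based lower bound for the sum over one side. -/
lemma sideSum (h4 : CycleFree G 4) {δ : ℕ} (hdeg : ∀ x, δ ≤ (G.neighborFinset x).card)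
    (h3 : 3 ≤ δ) (hodd : Odd δ) {v w : V} (hvw : G.Adj v w)
    (hA' : δ - 2 ≤ (((G.neighborFinset v).erase w) \ G.neighborFinset w).card) :
    (δ - 2) * (δ - 1) + 1 ≤
      ∑ x ∈ ((G.neighborFinset v).erase w) \ G.neighborFinset w, (insert x (SS G v w x)).card := by
  set A' := ((G.neighborFinset v).erase w) \ G.neighborFinset w with hA'def
  have hA'mem : ∀ x ∈ A', G.Adj v x ∧ x ≠ w ∧ ¬ G.Adj w x := by
    intro x hx
    simp only [hA'def, Finset.mem_sdiff, Finset.mem_erase, SimpleGraph.mem_neighborFinset] at hx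
    exact ⟨hx.1.2, hx.1.1, hx.2⟩
  have hTge : ∀ x ∈ A', δ - 1 ≤ (insert x (SS G v w x)).card := by
    intro x hx
    obtain ⟨h1, h2, _⟩ := hA'mem x hx
    have := Scard h4 hdeg hvw (x := x) (Finset.mem_union_left _
      (Finset.mem_erase.mpr ⟨h2, (SimpleGraph.mem_neighborFinset _ _ _).mpr h1⟩))
    rw [card_TT]
    omega
  by_cases hm : δ - 1 ≤ A'.card
  · -- plenty of vertices
    have hsum : A'.card * (δ - 1) ≤ ∑ x ∈ A', (insert x (SS G v w x)).card := by
      simpa using Finset.card_nsmul_le_sum A' _ _ hTge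
    have : (δ - 1) * (δ - 1) ≤ A'.card * (δ - 1) := Nat.mul_le_mul_right _ hm
    obtain ⟨m, rfl⟩ : ∃ m, δ = m + 3 := ⟨δ - 3, by omega⟩
    simp only [Nat.add_sub_cancel, show m + 3 - 1 = m + 2 by omega, show m + 3 - 2 = m + 1 by omega] at *
    nlinarith [hsum, this]
  · -- A'.card = δ - 2, odd; use the pairing
    have hmcard : A'.card = δ - 2 := by omega
    have hmodd : Odd A'.card := by
      obtain ⟨k, hk⟩ := hodd; rw [hmcard]; exact ⟨k - 1, by omega⟩
    set f : V → V := fun x =>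
      if h : (G.neighborFinset x ∩ G.neighborFinset v).Nonempty then h.choose else x with hfdef
    set M := A'.filter (fun x => (G.neighborFinset x ∩ G.neighborFinset v).Nonempty) with hMdef
    have hfspec : ∀ x, (G.neighborFinset x ∩ G.neighborFinset v).Nonempty →
        G.Adj x (f x) ∧ G.Adj v (f x) := by
      intro x hne
      have hc := hne.choose_spec
      simp only [Finset.mem_inter, SimpleGraph.mem_neighborFinset] at hc
      simp only [hfdef, dif_pos hne]
      exact hc
    have hMf : ∀ x ∈ M, f x ∈ M ∧ f (f x) = x ∧ f x ≠ x := by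
      intro x hx
      simp only [hMdef, Finset.mem_filter] at hx
      obtain ⟨hxA, hxne⟩ := hx
      obtain ⟨hvx, hxw, hwx⟩ := hA'mem x hxA
      obtain ⟨hadj, hvfx⟩ := hfspec x hxne
      have hfxw : f x ≠ w := by
        intro h; rw [h] at hadj; exact hwx hadj.symm
      have hfxNw : ¬ G.Adj w (f x) := by
        intro h
        -- f x is a common neighbor of v and w adjacent to x ∈ Nv \ {w} : C4.
        exact crossAdj h4 hvw hvx hxw h hvfx.ne' hadj
      have hfxA : f x ∈ A' := by
        simp only [hA'def, Finset.mem_sdiff, Finset.mem_erase, SimpleGraph.mem_neighborFinset]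
        exact ⟨⟨hfxw, hvfx⟩, hfxNw⟩
      have hfxne : (G.neighborFinset (f x) ∩ G.neighborFinset v).Nonempty :=
        ⟨x, by simp [SimpleGraph.mem_neighborFinset, hadj.symm, hvx]⟩
      obtain ⟨hadj2, hvffx⟩ := hfspec (f x) hfxne
      have hffx : f (f x) = x := by
        -- uniqueness of the Nv-neighbor of f x
        exact uniqNbr h4 hvfx.ne' hvffx hvx hadj2 hadj.symm
      refine ⟨?_, hffx, hadj.ne'⟩
      simp only [hMdef, Finset.mem_filter]
      exact ⟨hfxA, hfxne⟩
    have hMeven : Even M.card := even_card_pairing f M (fun x hx => (hMf x hx).1)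
      (fun x hx => (hMf x hx).2.1) (fun x hx => (hMf x hx).2.2)
    have hMsub : M ⊆ A' := Finset.filter_subset _ _
    have hMne : M ≠ A' := by
      intro h; rw [h] at hMeven; exact (Nat.not_even_iff_odd.mpr hmodd) hMeven
    obtain ⟨x₀, hx₀A, hx₀M⟩ := Finset.exists_of_ssubset (lt_of_le_of_ne hMsub hMne)
    have hx₀empty : G.neighborFinset x₀ ∩ G.neighborFinset v = ∅ := by
      rw [← Finset.not_nonempty_iff_eq_empty]
      intro h
      exact hx₀M (by simp only [hMdef, Finset.mem_filter]; exact ⟨hx₀A, h⟩)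
    obtain ⟨hvx₀, hx₀w, hwx₀⟩ := hA'mem x₀ hx₀A
    have hS1 : δ - 1 ≤ (SS G v w x₀).card := Scard1 h4 hdeg hvw hvx₀ hx₀w hwx₀ hx₀empty
    have hsplit : (insert x₀ (SS G v w x₀)).card +
        ∑ x ∈ A'.erase x₀, (insert x (SS G v w x)).card =
        ∑ x ∈ A', (insert x (SS G v w x)).card := Finset.add_sum_erase A' (fun x => (insert x (SS G v w x)).card) hx₀A
    have hrest : (A'.erase x₀).card * (δ - 1) ≤
        ∑ x ∈ A'.erase x₀, (insert x (SS G v w x)).card := by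
      simpa using Finset.card_nsmul_le_sum (A'.erase x₀) _ _
        (fun x hx => hTge x (Finset.mem_of_mem_erase hx))
    have hecard : (A'.erase x₀).card = δ - 3 := by
      rw [Finset.card_erase_of_mem hx₀A, hmcard]; omega
    have hT0 : δ ≤ (insert x₀ (SS G v w x₀)).card := by rw [card_TT]; omega
    rw [hecard] at hrest
    obtain ⟨m, rfl⟩ : ∃ m, δ = m + 3 := ⟨δ - 3, by omega⟩
    simp only [Nat.add_sub_cancel, show m + 3 - 1 = m + 2 by omega,
      show m + 3 - 2 = m + 1 by omega] at *
    nlinarith [hsplit, hrest, hT0]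

theorem stmt_3X (G : SimpleGraph V) [DecidableRel G.Adj]
    (h4 : CycleFree G 4) (h5 : CycleFree G 5) (δ : ℕ) (hδ : δ = G.minDegree) (h3 : 3 ≤ δ)
    (v w : V) (hvw : G.Adj v w) :
    (Even δ → 2 * δ ^ 2 - 5 * δ + 5 ≤ {x : V | G.edist v x ≤ 2 ∨ G.edist w x ≤ 2}.ncard) ∧
      (Odd δ → 2 * δ ^ 2 - 5 * δ + 7 ≤ {x : V | G.edist v x ≤ 2 ∨ G.edist w x ≤ 2}.ncard) := by
  classical
  have hdeg : ∀ x : V, δ ≤ (G.neighborFinset x).card := by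
    intro x
    rw [hδ, SimpleGraph.card_neighborFinset_eq_degree]
    exact G.minDegree_le_degree x
  set Nv := G.neighborFinset v with hNvdef
  set Nw := G.neighborFinset w with hNwdef
  set A := Nv.erase w with hAdef
  set B := Nw.erase v with hBdef
  set I := A ∪ B with hIdef
  set Sum := ∑ x ∈ I, (insert x (SS G v w x)).card with hSumdef
  set U := I.biUnion (fun x => insert x (SS G v w x)) with hUdef
  set Tot := insert v (insert w U) with hTotdef
  have hIadj : ∀ x ∈ I, G.Adj v x ∨ G.Adj w x := by
    intro x hx
    rcases Finset.mem_union.mp hx with h | h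
    · exact Or.inl ((SimpleGraph.mem_neighborFinset _ _ _).mp (Finset.mem_of_mem_erase h))
    · exact Or.inr ((SimpleGraph.mem_neighborFinset _ _ _).mp (Finset.mem_of_mem_erase h))
  have hIne : ∀ x ∈ I, x ≠ v ∧ x ≠ w := by
    intro x hx
    rcases Finset.mem_union.mp hx with h | h
    · exact ⟨((SimpleGraph.mem_neighborFinset _ _ _).mp (Finset.mem_of_mem_erase h)).ne',
        (Finset.mem_erase.mp h).1⟩
    · exact ⟨(Finset.mem_erase.mp h).1,
        ((SimpleGraph.mem_neighborFinset _ _ _).mp (Finset.mem_of_mem_erase h)).ne'⟩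
  have hSmem : ∀ a z, z ∈ SS G v w a →
      G.Adj a z ∧ ¬ G.Adj v z ∧ ¬ G.Adj w z ∧ z ≠ v ∧ z ≠ w := by
    intro a z hz
    simp only [SS, Finset.mem_sdiff, Finset.mem_union, SimpleGraph.mem_neighborFinset,
      Finset.mem_insert, Finset.mem_singleton] at hz
    push_neg at hz
    tauto
  have hdisjT : ∀ x ∈ I, ∀ y ∈ I, x ≠ y →
      Disjoint (insert x (SS G v w x)) (insert y (SS G v w y)) := by
    intro x hx y hy hxy
    rw [Finset.disjoint_left]
    intro z hzx hzy
    rcases Finset.mem_insert.mp hzx with rfl | hzSx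
    · rcases Finset.mem_insert.mp hzy with rfl | hzSy
      · exact hxy rfl
      · rcases hIadj z hx with h | h
        · exact (hSmem y z hzSy).2.1 h
        · exact (hSmem y z hzSy).2.2.1 h
    · rcases Finset.mem_insert.mp hzy with rfl | hzSy
      · rcases hIadj z hy with h | h
        · exact (hSmem x z hzSx).2.1 h
        · exact (hSmem x z hzSx).2.2.1 h
      · obtain ⟨hxz, _, _, hzv, hzw⟩ := hSmem x z hzSx
        obtain ⟨hyz, _, _, _, _⟩ := hSmem y z hzSy
        by_cases hvx : G.Adj v x <;> by_cases hvy : G.Adj v y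
        · exact hxy (uniqNbr h4 hzv hvx hvy hxz.symm hyz.symm)
        · have hwy : G.Adj w y := (hIadj y hy).resolve_left hvy
          by_cases hwx : G.Adj w x
          · exact hxy (uniqNbr h4 hzw hwx hwy hxz.symm hyz.symm)
          · exact crossC5 h5 hvw hvx hwy hxz hyz.symm hzv hzw (hIne y hy).1 (hIne x hx).2 hxy
        · have hwx : G.Adj w x := (hIadj x hx).resolve_left hvx
          exact crossC5 h5 hvw.symm hwx hvy hxz hyz.symm hzw hzv (hIne y hy).2 (hIne x hx).1 hxy
        · have hwx : G.Adj w x := (hIadj x hx).resolve_left hvx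
          have hwy : G.Adj w y := (hIadj y hy).resolve_left hvy
          exact hxy (uniqNbr h4 hzw hwx hwy hxz.symm hyz.symm)
  have hUv : v ∉ U := by
    intro h
    obtain ⟨x, hxI, hxmem⟩ := Finset.mem_biUnion.mp h
    rcases Finset.mem_insert.mp hxmem with h' | h'
    · exact (hIne x hxI).1 h'.symm
    · exact (hSmem x v h').2.2.2.1 rfl
  have hUw : w ∉ U := by
    intro h
    obtain ⟨x, hxI, hxmem⟩ := Finset.mem_biUnion.mp h
    rcases Finset.mem_insert.mp hxmem with h' | h'
    · exact (hIne x hxI).2 h'.symm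
    · exact (hSmem x w h').2.2.2.2 rfl
  have hTotcard : Tot.card = Sum + 2 := by
    rw [hTotdef, Finset.card_insert_of_notMem (by simp [hvw.ne, hUv]),
      Finset.card_insert_of_notMem hUw, hUdef, Finset.card_biUnion hdisjT]
  have hsub : ↑Tot ⊆ {x : V | G.edist v x ≤ 2 ∨ G.edist w x ≤ 2} := by
    intro z hz
    simp only [hTotdef, Finset.coe_insert, Set.mem_insert_iff, Finset.mem_coe] at hz
    rcases hz with rfl | rfl | hzU
    · exact Or.inl (by rw [SimpleGraph.edist_self]; exact zero_le)
    · exact Or.inr (by rw [SimpleGraph.edist_self]; exact zero_le)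
    · obtain ⟨x, hxI, hxmem⟩ := Finset.mem_biUnion.mp hzU
      rcases hIadj x hxI with hvx | hwx
      · refine Or.inl ?_
        rcases Finset.mem_insert.mp hxmem with rfl | h'
        · exact le_trans ((Walk.cons hvx Walk.nil).edist_le) (by norm_num)
        · exact le_trans ((Walk.cons hvx (Walk.cons (hSmem x z h').1 Walk.nil)).edist_le)
            (by norm_num)
      · refine Or.inr ?_
        rcases Finset.mem_insert.mp hxmem with rfl | h'
        · exact le_trans ((Walk.cons hwx Walk.nil).edist_le) (by norm_num)
        · exact le_trans ((Walk.cons hwx (Walk.cons (hSmem x z h').1 Walk.nil)).edist_le)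
            (by norm_num)
  have hncard : Tot.card ≤ {x : V | G.edist v x ≤ 2 ∨ G.edist w x ≤ 2}.ncard := by
    rw [← Set.ncard_coe_finset]
    exact Set.ncard_le_ncard hsub (Set.toFinite _)
  have hwNv : w ∈ Nv := by rw [hNvdef]; exact (SimpleGraph.mem_neighborFinset _ _ _).mpr hvw
  have hvNw : v ∈ Nw := by rw [hNwdef]; exact (SimpleGraph.mem_neighborFinset _ _ _).mpr hvw.symm
  have hAcard : δ - 1 ≤ A.card := by
    rw [hAdef, Finset.card_erase_of_mem hwNv]
    have h := hdeg v
    rw [← hNvdef] at h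
    omega
  have hBcard : δ - 1 ≤ B.card := by
    rw [hBdef, Finset.card_erase_of_mem hvNw]
    have h := hdeg w
    rw [← hNwdef] at h
    omega
  have hABinter : A ∩ B = Nv ∩ Nw := by
    ext z
    simp only [hAdef, hBdef, Finset.mem_inter, Finset.mem_erase]
    constructor
    · rintro ⟨⟨_, h1⟩, ⟨_, h2⟩⟩; exact ⟨h1, h2⟩
    · rintro ⟨h1, h2⟩
      refine ⟨⟨?_, h1⟩, ?_, h2⟩
      · rw [hNwdef, SimpleGraph.mem_neighborFinset] at h2; exact h2.ne'
      · rw [hNvdef, SimpleGraph.mem_neighborFinset] at h1; exact h1.ne'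
  have hCap : (Nv ∩ Nw).card ≤ 1 := by
    rw [Finset.card_le_one]
    intro a ha b hb
    simp only [hNvdef, hNwdef, Finset.mem_inter, SimpleGraph.mem_neighborFinset] at ha hb
    exact uniqNbr h4 hvw.ne' ha.1 hb.1 ha.2 hb.2
  have hIcard : I.card + (A ∩ B).card = A.card + B.card := Finset.card_union_add_card_inter A B
  have hABle : (A ∩ B).card ≤ 1 := by rw [hABinter]; exact hCap
  have hTge : ∀ x ∈ I, δ - 1 ≤ (insert x (SS G v w x)).card := by
    intro x hx
    have := Scard h4 hdeg hvw (x := x) hx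
    rw [card_TT]
    omega
  obtain ⟨m, rfl⟩ : ∃ m, δ = m + 3 := ⟨δ - 3, by omega⟩
  obtain ⟨q, hq⟩ : ∃ q, q = m * m := ⟨_, rfl⟩
  have hsumI : I.card * (m + 2) ≤ Sum := by
    rw [hSumdef]
    simpa using Finset.card_nsmul_le_sum I _ (m + 2) (fun x hx => by have := hTge x hx; omega)
  have hsq : (m + 3) ^ 2 = q + 6 * m + 9 := by rw [hq]; ring
  constructor
  · intro _
    have hI1 : 2 * m + 3 ≤ I.card := by omega
    have hchain : 2 * q + 7 * m + 6 ≤ Sum := by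
      calc 2 * q + 7 * m + 6 = (2 * m + 3) * (m + 2) := by rw [hq]; ring
        _ ≤ I.card * (m + 2) := Nat.mul_le_mul_right _ hI1
        _ ≤ Sum := hsumI
    rw [hsq]
    omega
  · intro hodd
    by_cases hc0 : (Nv ∩ Nw).card = 0
    · have hc0' : (A ∩ B).card = 0 := by rw [hABinter]; exact hc0
      have hI1 : 2 * m + 4 ≤ I.card := by omega
      have hchain : 2 * q + 8 * m + 8 ≤ Sum := by
        calc 2 * q + 8 * m + 8 = (2 * m + 4) * (m + 2) := by rw [hq]; ring
          _ ≤ I.card * (m + 2) := Nat.mul_le_mul_right _ hI1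
          _ ≤ Sum := hsumI
      rw [hsq]
      omega
    · have hc1 : (Nv ∩ Nw).card = 1 := by omega
      have hABc1 : (A ∩ B).card = 1 := by rw [hABinter]; exact hc1
      have hA'c : m + 1 ≤ (A \ Nw).card := by
        have h1 : (A ∩ Nw).card ≤ 1 := by
          refine le_trans (Finset.card_le_card ?_) hCap
          exact Finset.inter_subset_inter_right (by rw [hAdef]; exact Finset.erase_subset _ _)
        have h2 := Finset.card_sdiff_add_card_inter A Nw
        omega
      have hB'c : m + 1 ≤ (B \ Nv).card := by
        have h1 : (B ∩ Nv).card ≤ 1 := by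
          have hCap' : (Nw ∩ Nv).card ≤ 1 := by rw [Finset.inter_comm]; exact hCap
          refine le_trans (Finset.card_le_card ?_) hCap'
          exact Finset.inter_subset_inter_right (by rw [hBdef]; exact Finset.erase_subset _ _)
        have h2 := Finset.card_sdiff_add_card_inter B Nv
        omega
      have hIeq : I = ((A \ Nw) ∪ (B \ Nv)) ∪ (Nv ∩ Nw) := by
        ext z
        simp only [hIdef, Finset.mem_union, Finset.mem_sdiff, Finset.mem_inter]
        constructor
        · rintro (hA | hB)
          · by_cases hzw : z ∈ Nw
            · rw [hAdef] at hA
              exact Or.inr ⟨Finset.mem_of_mem_erase hA, hzw⟩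
            · exact Or.inl (Or.inl ⟨hA, hzw⟩)
          · by_cases hzv : z ∈ Nv
            · rw [hBdef] at hB
              exact Or.inr ⟨hzv, Finset.mem_of_mem_erase hB⟩
            · exact Or.inl (Or.inr ⟨hB, hzv⟩)
        · rintro ((⟨h, _⟩ | ⟨h, _⟩) | ⟨h1, h2⟩)
          · exact Or.inl h
          · exact Or.inr h
          · refine Or.inl ?_
            rw [hAdef, Finset.mem_erase]
            refine ⟨?_, h1⟩
            rw [hNwdef, SimpleGraph.mem_neighborFinset] at h2; exact h2.ne'
      have hd2 : Disjoint (A \ Nw) (B \ Nv) := by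
        rw [Finset.disjoint_left]
        intro z hz1 hz2
        rw [Finset.mem_sdiff] at hz1 hz2
        have := hz1.1
        rw [hAdef] at this
        exact hz2.2 (Finset.mem_of_mem_erase this)
      have hd1 : Disjoint ((A \ Nw) ∪ (B \ Nv)) (Nv ∩ Nw) := by
        rw [Finset.disjoint_left]
        intro z hz1 hz2
        rw [Finset.mem_inter] at hz2
        rcases Finset.mem_union.mp hz1 with h | h
        · exact (Finset.mem_sdiff.mp h).2 hz2.2
        · exact (Finset.mem_sdiff.mp h).2 hz2.1
      have hsumsplit : Sum = (∑ x ∈ A \ Nw, (insert x (SS G v w x)).card) +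
          (∑ x ∈ B \ Nv, (insert x (SS G v w x)).card) +
          (∑ x ∈ Nv ∩ Nw, (insert x (SS G v w x)).card) := by
        rw [hSumdef, hIeq, Finset.sum_union hd1, Finset.sum_union hd2]
      have hCsum : m + 2 ≤ ∑ x ∈ Nv ∩ Nw, (insert x (SS G v w x)).card := by
        obtain ⟨u, hu⟩ := Finset.card_eq_one.mp hc1
        have huC : u ∈ Nv ∩ Nw := by rw [hu]; exact Finset.mem_singleton_self u
        have huI : u ∈ I := by
          rw [hIdef, Finset.mem_union, hAdef, Finset.mem_erase]
          refine Or.inl ⟨?_, (Finset.mem_inter.mp huC).1⟩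
          have := (Finset.mem_inter.mp huC).2
          rw [hNwdef, SimpleGraph.mem_neighborFinset] at this; exact this.ne'
        rw [hu, Finset.sum_singleton]
        have := hTge u huI; omega
      have hA'sum : (m + 1) * (m + 2) + 1 ≤ ∑ x ∈ A \ Nw, (insert x (SS G v w x)).card := by
        have := sideSum h4 hdeg h3 hodd hvw (v := v) (w := w) (by
          show m + 3 - 2 ≤ _
          rw [← hNvdef, ← hNwdef, ← hAdef]
          omega)
        rw [← hNvdef, ← hNwdef, ← hAdef] at this
        convert this using 3 <;> omega
      have hB'sum : (m + 1) * (m + 2) + 1 ≤ ∑ x ∈ B \ Nv, (insert x (SS G v w x)).card := by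
        have := sideSum h4 hdeg h3 hodd hvw.symm (v := w) (w := v) (by
          show m + 3 - 2 ≤ _
          rw [← hNvdef, ← hNwdef, ← hBdef]
          omega)
        rw [← hNvdef, ← hNwdef, ← hBdef] at this
        have heq : ∀ x, insert x (SS G w v x) = insert x (SS G v w x) := by
          intro x; rw [← SS_symm]
        simp only [heq] at this
        convert this using 3 <;> omega
      have hprod : (m + 1) * (m + 2) = q + 3 * m + 2 := by rw [hq]; ring
      rw [hsq]
      omega

end Main

theorem stmt_3 {V : Type*} [Fintype V] (G : SimpleGraph V) [DecidableRel G.Adj]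
    (h4 : CycleFree G 4) (h5 : CycleFree G 5) (δ : ℕ) (hδ : δ = G.minDegree) (h3 : 3 ≤ δ)
    (v w : V) (hvw : G.Adj v w) :
    (Even δ → 2 * δ ^ 2 - 5 * δ + 5 ≤ {x : V | G.edist v x ≤ 2 ∨ G.edist w x ≤ 2}.ncard) ∧
      (Odd δ → 2 * δ ^ 2 - 5 * δ + 7 ≤ {x : V | G.edist v x ≤ 2 ∨ G.edist w x ≤ 2}.ncard) := by
  classical
  exact stmt_3X G h4 h5 δ hδ h3 v w hvw
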